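/- arXiv:2411.11718 — 3 statements merged into one kernel-verified Lean document; each statement's English description precedes it below -/
import Mathlib

section
/- Let G be a finite connected graph with nonnegative edge weights, let H be a subgraph of G containing vertices u and v, and let S ⊆ V(G) be a set of vertices such that every u–v walk in G that uses an edge not in H passes through some vertex of S. Then dist_G(u,v) = min( dist_H(u,v), min_{x ∈ S} ( dist_G(u,x) + dist_G(x,v) ) ), where dist_H(u,v) = ∞ if u,v are not connected in H. -/
open SimpleGraph
open scoped ENNReal

/-- Total weight of a walk in an `ℝ≥0∞`-weighted graph. -/
noncomputable def ewalkWeight {V : Type*} {G : SimpleGraph V} (w : V → V → ℝ≥0∞)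
    {u v : V} (p : G.Walk u v) : ℝ≥0∞ :=
  (p.darts.map fun d => w d.toProd.1 d.toProd.2).sum

/-- Shortest-path distance in an `ℝ≥0∞`-weighted graph, `∞` if not connected. -/
noncomputable def eDist {V : Type*} (G : SimpleGraph V) (w : V → V → ℝ≥0∞) (u v : V) : ℝ≥0∞ :=
  ⨅ p : G.Walk u v, ewalkWeight w p

lemma ewalkWeight_append {V : Type*} {G : SimpleGraph V} (w : V → V → ℝ≥0∞)
    {u v x : V} (p : G.Walk u v) (q : G.Walk v x) :
    ewalkWeight w (p.append q) = ewalkWeight w p + ewalkWeight w q := by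
  simp [ewalkWeight, Walk.darts_append]

lemma ewalkWeight_transfer {V : Type*} {G : SimpleGraph V} (w : V → V → ℝ≥0∞)
    {u v : V} (p : G.Walk u v) (H : SimpleGraph V) (h : ∀ e ∈ p.edges, e ∈ H.edgeSet) :
    ewalkWeight w (p.transfer H h) = ewalkWeight w p := by
  induction p with
  | nil => simp [ewalkWeight]
  | cons ha p ih =>
    simp only [Walk.transfer, ewalkWeight, Walk.darts_cons, List.map_cons, List.sum_cons]
    congr 1
    exact congrArg (w _ _ + ·) (ih _)

lemma eDist_triangle {V : Type*} (G : SimpleGraph V) (w : V → V → ℝ≥0∞) (u x v : V) :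
    eDist G w u v ≤ eDist G w u x + eDist G w x v := by
  rw [eDist, eDist, eDist, ENNReal.iInf_add]
  refine le_iInf fun p => ?_
  rw [ENNReal.add_iInf]
  refine le_iInf fun q => ?_
  refine iInf_le_of_le (p.append q) ?_
  rw [ewalkWeight_append]

theorem stmt3 {V : Type*} [Fintype V] (G H : SimpleGraph V) (hHG : H ≤ G)
    (hconn : G.Connected) (w : V → V → ℝ≥0∞) (u v : V) (S : Set V)
    (hsep : ∀ p : G.Walk u v,
      (∃ d ∈ p.darts, ¬ H.Adj d.toProd.1 d.toProd.2) → ∃ x ∈ S, x ∈ p.support) :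
    eDist G w u v =
      min (eDist H w u v) (⨅ x ∈ S, eDist G w u x + eDist G w x v) := by
  classical
  apply le_antisymm
  · refine le_min ?_ ?_
    · rw [eDist, eDist]
      refine le_iInf fun p => ?_
      have h : ∀ e ∈ p.edges, e ∈ G.edgeSet := fun e he =>
        SimpleGraph.edgeSet_mono hHG (p.edges_subset_edgeSet he)
      refine iInf_le_of_le (p.transfer G h) ?_
      rw [ewalkWeight_transfer]
    · refine le_iInf fun x => le_iInf fun _ => eDist_triangle G w u x v
  · rw [eDist]
    refine le_iInf fun p => ?_
    by_cases hall : ∀ d ∈ p.darts, H.Adj d.toProd.1 d.toProd.2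
    · have h : ∀ e ∈ p.edges, e ∈ H.edgeSet := by
        intro e he
        simp only [Walk.edges, List.mem_map] at he
        obtain ⟨d, hd, rfl⟩ := he
        exact (hall d hd)
      refine min_le_of_left_le ?_
      refine iInf_le_of_le (p.transfer H h) ?_
      rw [ewalkWeight_transfer]
    · push_neg at hall
      obtain ⟨x, hxS, hxp⟩ := hsep p ⟨hall.choose, hall.choose_spec⟩
      refine min_le_of_right_le ?_
      refine le_trans (iInf₂_le x hxS) ?_
      calc eDist G w u x + eDist G w x v
          ≤ ewalkWeight w (p.takeUntil x hxp) + ewalkWeight w (p.dropUntil x hxp) := by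
            gcongr <;> exact iInf_le _ _
        _ = ewalkWeight w ((p.takeUntil x hxp).append (p.dropUntil x hxp)) :=
            (ewalkWeight_append w _ _).symm
        _ = ewalkWeight w p := by rw [p.take_spec hxp]
end

section
/- Let G be a finite connected graph, T a spanning tree of G, and (S, V∖S) a cut with S nonempty and V∖S nonempty. Suppose exactly two distinct tree edges e₁, e₂ ∈ E(T) cross the cut (i.e., have one endpoint in S and one in V∖S). Then T − {e₁, e₂} has exactly three connected components, exactly one of these components is incident (in T) to both e₁ and e₂, and that component's vertex set equals either S or V∖S. -/
open SimpleGraph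

private lemma reach_side' {V : Type*} {T : SimpleGraph V} {S : Set V} {E : Set (Sym2 V)}
    (hcross : ∀ x y : V, (T.deleteEdges E).Adj x y → x ∈ S → y ∈ S) :
    ∀ {x y : V}, (T.deleteEdges E).Reachable x y → (x ∈ S ↔ y ∈ S) := by
  intro x y hr
  obtain ⟨w⟩ := hr
  induction w with
  | nil => rfl
  | @cons u v _ h p ih =>
    exact Iff.trans ⟨fun hu => hcross u v h hu, fun hv => hcross v u h.symm hv⟩ ih

private lemma my_hcross {V : Type*} {T : SimpleGraph V} {S : Set V} {E : Set (Sym2 V)}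
    {a₁ b₁ a₂ b₂ : V}
    (hE : E = {s(a₁, b₁), s(a₂, b₂)})
    (honly : ∀ x y : V, T.Adj x y → x ∈ S → y ∉ S →
      s(x, y) = s(a₁, b₁) ∨ s(x, y) = s(a₂, b₂)) :
    ∀ x y : V, (T.deleteEdges E).Adj x y → x ∈ S → y ∈ S := by
  intro x y hxy hx
  by_contra hy
  rw [SimpleGraph.deleteEdges_adj] at hxy
  rcases honly x y hxy.1 hx hy with h | h <;> exact hxy.2 (by rw [hE, h]; simp)

private lemma my_cover_aux {V : Type*} {T : SimpleGraph V} {E : Set (Sym2 V)} :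
    ∀ {x y : V} (_ : T.Walk x y),
      (T.deleteEdges E).Reachable x y ∨
      ∃ u v : V, s(u, v) ∈ E ∧ (T.deleteEdges E).Reachable x u := by
  intro x y w
  induction w with
  | nil => exact Or.inl (SimpleGraph.Reachable.refl _)
  | @cons u v _ h p ih =>
    by_cases he : s(u, v) ∈ E
    · exact Or.inr ⟨u, v, he, SimpleGraph.Reachable.refl _⟩
    · have hadj : (T.deleteEdges E).Adj u v := SimpleGraph.deleteEdges_adj.mpr ⟨h, he⟩
      rcases ih with r | ⟨u', v', he', r⟩
      · exact Or.inl (hadj.reachable.trans r)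
      · exact Or.inr ⟨u', v', he', hadj.reachable.trans r⟩

private lemma my_cover {V : Type*} {T : SimpleGraph V} {E : Set (Sym2 V)}
    {a₁ b₁ a₂ b₂ : V} (hT : T.Connected)
    (hE : E = {s(a₁, b₁), s(a₂, b₂)}) :
    ∀ x : V,
      (T.deleteEdges E).connectedComponentMk x = (T.deleteEdges E).connectedComponentMk a₁ ∨
      (T.deleteEdges E).connectedComponentMk x = (T.deleteEdges E).connectedComponentMk b₁ ∨
      (T.deleteEdges E).connectedComponentMk x = (T.deleteEdges E).connectedComponentMk a₂ ∨
      (T.deleteEdges E).connectedComponentMk x = (T.deleteEdges E).connectedComponentMk b₂ := by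
  intro x
  obtain ⟨w⟩ := hT.preconnected x a₁
  rcases my_cover_aux (E := E) w with r | ⟨u, v, he, r⟩
  · exact Or.inl (SimpleGraph.ConnectedComponent.sound r)
  · rw [hE] at he
    simp only [Set.mem_insert_iff, Set.mem_singleton_iff] at he
    rcases he with he | he <;> rw [Sym2.eq_iff] at he <;>
      rcases he with ⟨rfl, rfl⟩ | ⟨rfl, rfl⟩
    · exact Or.inl (SimpleGraph.ConnectedComponent.sound r)
    · exact Or.inr (Or.inl (SimpleGraph.ConnectedComponent.sound r))
    · exact Or.inr (Or.inr (Or.inl (SimpleGraph.ConnectedComponent.sound r)))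
    · exact Or.inr (Or.inr (Or.inr (SimpleGraph.ConnectedComponent.sound r)))

private lemma my_key {V : Type*} {T : SimpleGraph V} {S : Set V} {E : Set (Sym2 V)}
    {a₁ b₁ a₂ b₂ : V}
    (ha₁ : a₁ ∈ S) (hb₁ : b₁ ∉ S) (ha₂ : a₂ ∈ S) (hb₂ : b₂ ∉ S)
    (hE : E = {s(a₁, b₁), s(a₂, b₂)})
    (hside : ∀ x y : V, (T.deleteEdges E).connectedComponentMk x =
      (T.deleteEdges E).connectedComponentMk y → (x ∈ S ↔ y ∈ S))
    (hA : (T.deleteEdges E).connectedComponentMk a₁ ≠ (T.deleteEdges E).connectedComponentMk a₂)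
    (hB : (T.deleteEdges E).connectedComponentMk b₁ ≠ (T.deleteEdges E).connectedComponentMk b₂) :
    ∀ {x y : V} (_ : T.Walk x y),
      ((T.deleteEdges E).connectedComponentMk x = (T.deleteEdges E).connectedComponentMk a₁ ∨
       (T.deleteEdges E).connectedComponentMk x = (T.deleteEdges E).connectedComponentMk b₁) →
      ((T.deleteEdges E).connectedComponentMk y = (T.deleteEdges E).connectedComponentMk a₁ ∨
       (T.deleteEdges E).connectedComponentMk y = (T.deleteEdges E).connectedComponentMk b₁) := by
  intro x y w
  induction w with
  | nil => exact id
  | @cons u v _ h p ih =>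
    intro hu
    apply ih
    by_cases he : s(u, v) ∈ E
    · rw [hE] at he
      simp only [Set.mem_insert_iff, Set.mem_singleton_iff] at he
      rcases he with he | he <;> rw [Sym2.eq_iff] at he <;>
        rcases he with ⟨rfl, rfl⟩ | ⟨rfl, rfl⟩
      · exact Or.inr rfl
      · exact Or.inl rfl
      · rcases hu with h' | h'
        · exact absurd h'.symm hA
        · exact absurd ((hside _ _ h').mp ha₂) hb₁
      · rcases hu with h' | h'
        · exact absurd ((hside _ _ h').mpr ha₁) hb₂
        · exact absurd h'.symm hB
    · have hadj : (T.deleteEdges E).Adj u v := SimpleGraph.deleteEdges_adj.mpr ⟨h, he⟩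
      have huv : (T.deleteEdges E).connectedComponentMk u =
          (T.deleteEdges E).connectedComponentMk v :=
        SimpleGraph.ConnectedComponent.sound hadj.reachable
      rcases hu with h' | h'
      · exact Or.inl (huv.symm.trans h')
      · exact Or.inr (huv.symm.trans h')

private lemma my_atleast {V : Type*} {T : SimpleGraph V} {S : Set V} {E : Set (Sym2 V)}
    {a₁ b₁ a₂ b₂ : V} (hT : T.Connected)
    (ha₁ : a₁ ∈ S) (hb₁ : b₁ ∉ S) (ha₂ : a₂ ∈ S) (hb₂ : b₂ ∉ S)
    (hE : E = {s(a₁, b₁), s(a₂, b₂)})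
    (honly : ∀ x y : V, T.Adj x y → x ∈ S → y ∉ S →
      s(x, y) = s(a₁, b₁) ∨ s(x, y) = s(a₂, b₂)) :
    (T.deleteEdges E).connectedComponentMk a₁ = (T.deleteEdges E).connectedComponentMk a₂ ∨
    (T.deleteEdges E).connectedComponentMk b₁ = (T.deleteEdges E).connectedComponentMk b₂ := by
  classical
  have hside : ∀ x y : V, (T.deleteEdges E).connectedComponentMk x =
      (T.deleteEdges E).connectedComponentMk y → (x ∈ S ↔ y ∈ S) := fun x y h =>
    reach_side' (my_hcross hE honly) (SimpleGraph.ConnectedComponent.exact h)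
  by_contra hcon
  push_neg at hcon
  obtain ⟨hA, hB⟩ := hcon
  obtain ⟨w⟩ := hT.preconnected a₁ a₂
  rcases my_key ha₁ hb₁ ha₂ hb₂ hE hside hA hB w (Or.inl rfl) with h' | h'
  · exact hA h'.symm
  · exact hb₁ ((hside _ _ h').mp ha₂)

private lemma my_aux {V : Type*} (T : SimpleGraph V) (hT : T.IsTree)
    (S : Set V) (E : Set (Sym2 V)) (a₁ b₁ a₂ b₂ : V)
    (h₁ : T.Adj a₁ b₁) (ha₁ : a₁ ∈ S) (hb₁ : b₁ ∉ S)
    (h₂ : T.Adj a₂ b₂) (ha₂ : a₂ ∈ S) (hb₂ : b₂ ∉ S)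
    (hne : s(a₁, b₁) ≠ s(a₂, b₂))
    (hE : E = {s(a₁, b₁), s(a₂, b₂)})
    (honly : ∀ x y : V, T.Adj x y → x ∈ S → y ∉ S →
      s(x, y) = s(a₁, b₁) ∨ s(x, y) = s(a₂, b₂))
    (hcase : (T.deleteEdges E).connectedComponentMk a₁ =
             (T.deleteEdges E).connectedComponentMk a₂) :
    Nat.card (T.deleteEdges E).ConnectedComponent = 3 ∧
    (∀ c : (T.deleteEdges E).ConnectedComponent,
      (((T.deleteEdges E).connectedComponentMk a₁ = c ∨
        (T.deleteEdges E).connectedComponentMk b₁ = c) ∧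
       ((T.deleteEdges E).connectedComponentMk a₂ = c ∨
        (T.deleteEdges E).connectedComponentMk b₂ = c)) ↔
      c = (T.deleteEdges E).connectedComponentMk a₁) ∧
    ((T.deleteEdges E).connectedComponentMk a₁).supp = S := by
  classical
  have hside : ∀ x y : V, (T.deleteEdges E).connectedComponentMk x =
      (T.deleteEdges E).connectedComponentMk y → (x ∈ S ↔ y ∈ S) := fun x y h =>
    reach_side' (my_hcross hE honly) (SimpleGraph.ConnectedComponent.exact h)
  have cover := my_cover hT.isConnected hE
  -- b₁ and b₂ are in different components
  have hbne : (T.deleteEdges E).connectedComponentMk b₁ ≠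
      (T.deleteEdges E).connectedComponentMk b₂ := by
    intro hb
    have hbridge := isAcyclic_iff_forall_adj_isBridge.mp hT.IsAcyclic h₂
    rw [SimpleGraph.isBridge_iff] at hbridge
    apply hbridge
    have hle : T.deleteEdges E ≤ T \ SimpleGraph.fromEdgeSet {s(a₂, b₂)} := by
      rw [hE]
      exact SimpleGraph.deleteEdges_anti (by simp)
    have r₁ : (T \ SimpleGraph.fromEdgeSet {s(a₂, b₂)}).Reachable a₂ a₁ :=
      (SimpleGraph.ConnectedComponent.exact hcase.symm).mono hle
    have r₂ : (T \ SimpleGraph.fromEdgeSet {s(a₂, b₂)}).Reachable b₁ b₂ :=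
      (SimpleGraph.ConnectedComponent.exact hb).mono hle
    have hadj : (T \ SimpleGraph.fromEdgeSet {s(a₂, b₂)}).Adj a₁ b₁ := by
      have : (T.deleteEdges {s(a₂, b₂)}).Adj a₁ b₁ :=
        SimpleGraph.deleteEdges_adj.mpr ⟨h₁, by simpa using hne⟩
      exact this
    exact (r₁.trans hadj.reachable).trans r₂
  have h1b1 : (T.deleteEdges E).connectedComponentMk a₁ ≠
      (T.deleteEdges E).connectedComponentMk b₁ := by
    intro h; exact hb₁ ((hside _ _ h).mp ha₁)
  have h1b2 : (T.deleteEdges E).connectedComponentMk a₁ ≠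
      (T.deleteEdges E).connectedComponentMk b₂ := by
    intro h; exact hb₂ ((hside _ _ h).mp ha₁)
  refine ⟨?_, ?_, ?_⟩
  · -- card = 3
    have hbij : Function.Bijective
        ![(T.deleteEdges E).connectedComponentMk a₁, (T.deleteEdges E).connectedComponentMk b₁,
          (T.deleteEdges E).connectedComponentMk b₂] := by
      constructor
      · intro i j hij
        fin_cases i <;> fin_cases j <;>
          simp only [Matrix.cons_val_zero, Matrix.cons_val_one, Matrix.head_cons,
            Matrix.cons_val_two, Matrix.tail_cons, Fin.mk_zero, Fin.mk_one] at hij ⊢ <;>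
          first
            | rfl
            | exact absurd hij h1b1
            | exact absurd hij.symm h1b1
            | exact absurd hij h1b2
            | exact absurd hij.symm h1b2
            | exact absurd hij hbne
            | exact absurd hij.symm hbne
      · intro c
        obtain ⟨x, rfl⟩ := c.exists_rep
        rcases cover x with h | h | h | h
        · exact ⟨0, h.symm⟩
        · exact ⟨1, h.symm⟩
        · exact ⟨0, (h.trans hcase.symm).symm⟩
        · exact ⟨2, h.symm⟩
    rw [← Nat.card_eq_of_bijective _ hbij, Nat.card_eq_fintype_card, Fintype.card_fin]
  · -- characterization of the incident component
    intro c
    constructor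
    · rintro ⟨h1 | h1, h2 | h2⟩
      · exact h1.symm
      · exact h1.symm
      · exact absurd (hcase.trans (h2.trans h1.symm)) h1b1
      · exact absurd (h1.trans h2.symm) hbne
    · rintro rfl
      exact ⟨Or.inl rfl, Or.inl hcase.symm⟩
  · -- supp = S
    ext x
    rw [SimpleGraph.ConnectedComponent.mem_supp_iff]
    constructor
    · intro h
      exact (hside x a₁ h).mpr ha₁
    · intro hx
      rcases cover x with h | h | h | h
      · exact h
      · exact absurd ((hside x b₁ h).mp hx) hb₁
      · exact h.trans hcase.symm
      · exact absurd ((hside x b₂ h).mp hx) hb₂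

theorem stmt6 {V : Type*} [Fintype V] (G T : SimpleGraph V)
    (hTG : T ≤ G) (hT : T.IsTree)
    (S : Set V) (hS : S.Nonempty) (hSc : Sᶜ.Nonempty)
    (a₁ b₁ a₂ b₂ : V)
    (h₁ : T.Adj a₁ b₁) (ha₁ : a₁ ∈ S) (hb₁ : b₁ ∉ S)
    (h₂ : T.Adj a₂ b₂) (ha₂ : a₂ ∈ S) (hb₂ : b₂ ∉ S)
    (hne : s(a₁, b₁) ≠ s(a₂, b₂))
    (honly : ∀ x y : V, T.Adj x y → x ∈ S → y ∉ S →
      s(x, y) = s(a₁, b₁) ∨ s(x, y) = s(a₂, b₂)) :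
    Nat.card (T.deleteEdges {s(a₁, b₁), s(a₂, b₂)}).ConnectedComponent = 3 ∧
    (∃! c : (T.deleteEdges {s(a₁, b₁), s(a₂, b₂)}).ConnectedComponent,
      ((T.deleteEdges {s(a₁, b₁), s(a₂, b₂)}).connectedComponentMk a₁ = c ∨
        (T.deleteEdges {s(a₁, b₁), s(a₂, b₂)}).connectedComponentMk b₁ = c) ∧
      ((T.deleteEdges {s(a₁, b₁), s(a₂, b₂)}).connectedComponentMk a₂ = c ∨
        (T.deleteEdges {s(a₁, b₁), s(a₂, b₂)}).connectedComponentMk b₂ = c)) ∧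
    (∀ c : (T.deleteEdges {s(a₁, b₁), s(a₂, b₂)}).ConnectedComponent,
      (((T.deleteEdges {s(a₁, b₁), s(a₂, b₂)}).connectedComponentMk a₁ = c ∨
          (T.deleteEdges {s(a₁, b₁), s(a₂, b₂)}).connectedComponentMk b₁ = c) ∧
        ((T.deleteEdges {s(a₁, b₁), s(a₂, b₂)}).connectedComponentMk a₂ = c ∨
          (T.deleteEdges {s(a₁, b₁), s(a₂, b₂)}).connectedComponentMk b₂ = c)) →
      c.supp = S ∨ c.supp = Sᶜ) := by
  classical
  rcases my_atleast (E := {s(a₁, b₁), s(a₂, b₂)}) hT.isConnected ha₁ hb₁ ha₂ hb₂ rfl honly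
    with hca | hcb
  · obtain ⟨hcard, hiff, hsupp⟩ :=
      my_aux T hT S _ a₁ b₁ a₂ b₂ h₁ ha₁ hb₁ h₂ ha₂ hb₂ hne rfl honly hca
    refine ⟨hcard, ⟨_, (hiff _).mpr rfl, fun y hy => (hiff y).mp hy⟩, fun c hc => ?_⟩
    rw [(hiff c).mp hc]
    exact Or.inl hsupp
  · have hswap₁ : s(b₁, a₁) = s(a₁, b₁) := Sym2.eq_swap
    have hswap₂ : s(b₂, a₂) = s(a₂, b₂) := Sym2.eq_swap
    obtain ⟨hcard, hiff, hsupp⟩ :=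
      my_aux T hT Sᶜ {s(a₁, b₁), s(a₂, b₂)} b₁ a₁ b₂ a₂ h₁.symm hb₁
        (by simpa using ha₁) h₂.symm hb₂ (by simpa using ha₂)
        (by rw [hswap₁, hswap₂]; exact hne)
        (by rw [hswap₁, hswap₂])
        (by
          intro x y hxy hx hy
          have hy' : y ∈ S := by simpa using hy
          have hyx : s(y, x) = s(a₁, b₁) ∨ s(y, x) = s(a₂, b₂) := honly y x hxy.symm hy' hx
          rw [show s(x, y) = s(y, x) from Sym2.eq_swap, hswap₁, hswap₂]
          exact hyx)
        hcb
    have hiff' : ∀ c : (T.deleteEdges {s(a₁, b₁), s(a₂, b₂)}).ConnectedComponent,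
        (((T.deleteEdges {s(a₁, b₁), s(a₂, b₂)}).connectedComponentMk a₁ = c ∨
          (T.deleteEdges {s(a₁, b₁), s(a₂, b₂)}).connectedComponentMk b₁ = c) ∧
         ((T.deleteEdges {s(a₁, b₁), s(a₂, b₂)}).connectedComponentMk a₂ = c ∨
          (T.deleteEdges {s(a₁, b₁), s(a₂, b₂)}).connectedComponentMk b₂ = c)) ↔
        c = (T.deleteEdges {s(a₁, b₁), s(a₂, b₂)}).connectedComponentMk b₁ := by
      intro c
      rw [← hiff c]
      tauto
    refine ⟨hcard, ⟨_, (hiff' _).mpr rfl, fun y hy => (hiff' y).mp hy⟩, fun c hc => ?_⟩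
    rw [(hiff' c).mp hc]
    exact Or.inr hsupp
end

section
/- Let α ≥ 1 and let G be a finite simple graph on n vertices such that every subgraph of G on k vertices has at most α·k edges. Define a peeling process: in each round, delete simultaneously all vertices whose current degree is at most 3α. Then the process deletes at least one third of the remaining vertices in every round, and hence the graph is empty after at most ⌈log_{3/2} n⌉ + 1 rounds. -/
open SimpleGraph
open scoped Classical

/-- One round of peeling: keep exactly the vertices whose degree in the surviving
induced subgraph is strictly larger than `3 * α`. -/
noncomputable def peelStep {V : Type*} [DecidableEq V] (G : SimpleGraph V) [DecidableRel G.Adj]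
    (α : ℕ) (s : Finset V) : Finset V :=
  s.filter fun v => 3 * α < (s.filter fun u => G.Adj v u).card

/-- The set of surviving vertices after `k` rounds of peeling. -/
noncomputable def peel {V : Type*} [Fintype V] [DecidableEq V] (G : SimpleGraph V)
    [DecidableRel G.Adj] (α : ℕ) : ℕ → Finset V
  | 0 => Finset.univ
  | k + 1 => peelStep G α (peel G α k)

lemma sum_deg_eq_pairs {V : Type*} [DecidableEq V] (G : SimpleGraph V) [DecidableRel G.Adj]
    (s : Finset V) :
    ∑ v ∈ s, (s.filter fun u => G.Adj v u).card
      = ((s ×ˢ s).filter fun p => G.Adj p.1 p.2).card := by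
  rw [Finset.card_eq_sum_card_fiberwise (f := Prod.fst) (t := s)
    (fun p hp => by simp only [Finset.mem_coe, Finset.mem_filter, Finset.mem_product] at hp; exact hp.1.1)]
  refine Finset.sum_congr rfl fun v hv => ?_
  have : ((s ×ˢ s).filter fun p => G.Adj p.1 p.2).filter (fun p => p.1 = v)
      = (s.filter fun u => G.Adj v u).image (fun u => (v, u)) := by
    ext ⟨x, y⟩
    simp only [Finset.mem_filter, Finset.mem_product, Finset.mem_image]
    constructor
    · rintro ⟨⟨⟨hx, hy⟩, hadj⟩, rfl⟩
      exact ⟨y, ⟨hy, hadj⟩, rfl⟩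
    · rintro ⟨u, ⟨hu, hadj⟩, h⟩
      obtain ⟨rfl, rfl⟩ := Prod.mk.injEq .. ▸ h
      exact ⟨⟨⟨hv, hu⟩, hadj⟩, rfl⟩
  rw [this, Finset.card_image_of_injective _ (fun a b h => by simpa using h)]

lemma pairs_eq_two_mul {V : Type*} [Fintype V] [DecidableEq V] (G : SimpleGraph V)
    [DecidableRel G.Adj] (s : Finset V) :
    ((s ×ˢ s).filter fun p => G.Adj p.1 p.2).card
      = 2 * (G.edgeFinset.filter fun e => ∀ x ∈ e, x ∈ s).card := by
  have h1 : ∀ p ∈ (s ×ˢ s).filter fun p => G.Adj p.1 p.2,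
      Sym2.mk p.1 p.2 ∈ G.edgeFinset.filter fun e => ∀ x ∈ e, x ∈ s := by
    rintro ⟨x, y⟩ hp
    simp only [Finset.mem_filter, Finset.mem_product] at hp
    simp only [Finset.mem_filter, SimpleGraph.mem_edgeFinset, Sym2.mem_iff]
    refine ⟨hp.2, ?_⟩
    rintro z (rfl | rfl)
    exacts [hp.1.1, hp.1.2]
  rw [Finset.card_eq_sum_card_fiberwise h1]
  have h2 : ∀ e ∈ G.edgeFinset.filter fun e => ∀ x ∈ e, x ∈ s,
      (((s ×ˢ s).filter fun p => G.Adj p.1 p.2).filter fun p => Sym2.mk p.1 p.2 = e).card = 2 := by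
    intro e he
    induction e using Sym2.ind with
    | _ a b =>
      simp only [Finset.mem_filter, SimpleGraph.mem_edgeFinset, mem_edgeSet, Sym2.mem_iff] at he
      obtain ⟨hab, hmem⟩ := he
      have ha : a ∈ s := hmem a (Or.inl rfl)
      have hb : b ∈ s := hmem b (Or.inr rfl)
      have hne : a ≠ b := G.ne_of_adj hab
      have : (((s ×ˢ s).filter fun p => G.Adj p.1 p.2).filter fun p => Sym2.mk p.1 p.2 = s(a, b))
          = {(a, b), (b, a)} := by
        ext ⟨x, y⟩
        simp only [Finset.mem_filter, Finset.mem_product, Finset.mem_insert,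
          Finset.mem_singleton, Prod.mk.injEq, Sym2.mk_eq_mk_iff, Sym2.eq_iff, Prod.swap_prod_mk]
        constructor
        · rintro ⟨-, h⟩
          exact h
        · rintro (⟨rfl, rfl⟩ | ⟨rfl, rfl⟩)
          · exact ⟨⟨⟨ha, hb⟩, hab⟩, Or.inl ⟨rfl, rfl⟩⟩
          · exact ⟨⟨⟨hb, ha⟩, hab.symm⟩, Or.inr ⟨rfl, rfl⟩⟩
      rw [this, Finset.card_insert_of_notMem (by simp [hne]), Finset.card_singleton]
  rw [Finset.sum_congr rfl h2, Finset.sum_const, smul_eq_mul, mul_comm]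

lemma peelStep_card {V : Type*} [Fintype V] [DecidableEq V] (G : SimpleGraph V)
    [DecidableRel G.Adj] (α : ℕ) (hα : 1 ≤ α)
    (harb : ∀ s : Finset V,
      (G.edgeFinset.filter fun e => ∀ x ∈ e, x ∈ s).card ≤ α * s.card)
    (s : Finset V) : 3 * (peelStep G α s).card ≤ 2 * s.card := by
  set t := peelStep G α s with ht
  have hsub : t ⊆ s := Finset.filter_subset _ _
  have hlow : (3 * α + 1) * t.card ≤ ∑ v ∈ t, (s.filter fun u => G.Adj v u).card := by
    have := Finset.card_nsmul_le_sum t (fun v => (s.filter fun u => G.Adj v u).card)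
      (3 * α + 1) (fun v hv => Nat.succ_le_of_lt (Finset.mem_filter.mp hv).2)
    simpa [smul_eq_mul, mul_comm] using this
  have hup : ∑ v ∈ t, (s.filter fun u => G.Adj v u).card
      ≤ ∑ v ∈ s, (s.filter fun u => G.Adj v u).card :=
    Finset.sum_le_sum_of_subset hsub
  have key : (3 * α + 1) * t.card ≤ 2 * (α * s.card) := by
    calc (3 * α + 1) * t.card ≤ ∑ v ∈ s, (s.filter fun u => G.Adj v u).card :=
          hlow.trans hup
      _ = 2 * (G.edgeFinset.filter fun e => ∀ x ∈ e, x ∈ s).card := by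
          rw [sum_deg_eq_pairs, pairs_eq_two_mul]
      _ ≤ 2 * (α * s.card) := by exact Nat.mul_le_mul_left 2 (harb s)
  nlinarith [key, hα, Nat.zero_le t.card]

theorem stmt11 {V : Type*} [Fintype V] [DecidableEq V] (G : SimpleGraph V)
    [DecidableRel G.Adj] (α : ℕ) (hα : 1 ≤ α)
    (harb : ∀ s : Finset V,
      (G.edgeFinset.filter fun e => ∀ x ∈ e, x ∈ s).card ≤ α * s.card) :
    (∀ k : ℕ, 3 * (peel G α (k + 1)).card ≤ 2 * (peel G α k).card) ∧
      peel G α (⌈Real.logb (3 / 2) (Fintype.card V)⌉₊ + 1) = ∅ := by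
  have hstep : ∀ k : ℕ, 3 * (peel G α (k + 1)).card ≤ 2 * (peel G α k).card :=
    fun k => peelStep_card G α hα harb (peel G α k)
  refine ⟨hstep, ?_⟩
  set n := Fintype.card V with hn
  have hgeom : ∀ k : ℕ, 3 ^ k * (peel G α k).card ≤ 2 ^ k * n := by
    intro k
    induction k with
    | zero => simp [peel, hn, Finset.card_univ]
    | succ k ih =>
      calc 3 ^ (k + 1) * (peel G α (k + 1)).card
          = 3 ^ k * (3 * (peel G α (k + 1)).card) := by ring
        _ ≤ 3 ^ k * (2 * (peel G α k).card) := Nat.mul_le_mul_left _ (hstep k)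
        _ = 2 * (3 ^ k * (peel G α k).card) := by ring
        _ ≤ 2 * (2 ^ k * n) := Nat.mul_le_mul_left _ ih
        _ = 2 ^ (k + 1) * n := by ring
  set K := ⌈Real.logb (3 / 2) n⌉₊ + 1 with hK
  rcases Nat.eq_zero_or_pos n with h0 | hpos
  · have : (peel G α K).card = 0 := by
      have := (peel G α K).card_le_univ
      omega
    exact Finset.card_eq_zero.mp this
  · have hlt : (2 : ℕ) ^ K * n < 3 ^ K := by
      have hb : (1 : ℝ) < 3 / 2 := by norm_num
      have hlog : Real.logb (3 / 2) n < (K : ℝ) := by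
        have h1 : Real.logb (3 / 2) n ≤ (⌈Real.logb (3 / 2) n⌉₊ : ℝ) := by
          rcases le_or_gt (Real.logb (3 / 2) n) 0 with h | h
          · exact h.trans (by positivity)
          · exact Nat.le_ceil _
        have : ((⌈Real.logb (3 / 2) n⌉₊ : ℝ)) < K := by
          rw [hK]; push_cast; linarith
        linarith
      have hnlt : (n : ℝ) < (3 / 2) ^ K := by
        have h2 : (3 / 2 : ℝ) ^ (Real.logb (3 / 2) n) < (3 / 2 : ℝ) ^ (K : ℝ) :=
          (Real.rpow_lt_rpow_left_iff hb).mpr hlog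
        rw [Real.rpow_logb (by norm_num) (by norm_num) (by exact_mod_cast hpos)] at h2
        rwa [Real.rpow_natCast] at h2
      have : ((2 : ℕ) ^ K * n : ℝ) < ((3 : ℕ) ^ K : ℝ) := by
        push_cast
        have h2pos : (0 : ℝ) < 2 ^ K := by positivity
        calc (2 : ℝ) ^ K * n < 2 ^ K * ((3 / 2) ^ K) := by
              exact (mul_lt_mul_iff_right₀ h2pos).mpr hnlt
          _ = 3 ^ K := by
              rw [div_pow, mul_div_cancel₀]
              positivity
      exact_mod_cast this
    have hcard : (peel G α K).card = 0 := by
      by_contra h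
      have h1 : 1 ≤ (peel G α K).card := Nat.pos_of_ne_zero h
      have hg := hgeom K
      have h2 : 3 ^ K * 1 ≤ 3 ^ K * (peel G α K).card := Nat.mul_le_mul_left _ h1
      omega
    exact Finset.card_eq_zero.mp hcard
end
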